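/- Let R be a commutative ring with Jacobson radical J(R). The following are equivalent: (1) R is clean and for every prime ideal 𝔭 of R, the Jacobson radical of the Pierce stalk R/I(𝔭) equals the image of J(R) under the quotient map R → R/I(𝔭); (2) for every r ∈ R there is an idempotent e ∈ R such that re + (1−e) is a unit of R and r(1−e) ∈ J(R); (3) the quotient ring R/J(R) is von Neumann regular (for every a there is b with aba = a) and idempotents lift uniquely modulo J(R), i.e., for every a ∈ R with a² − a ∈ J(R) there is a unique idempotent e ∈ R with e − a ∈ J(R). -/

import Mathlib

/-- A ring is *clean* if every element is the sum of an idempotent and a unit. -/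
def IsCleanRing (R : Type*) [Ring R] : Prop :=
  ∀ a : R, ∃ e u : R, IsIdempotentElem e ∧ IsUnit u ∧ a = e + u

/-- The ideal of `R` generated by the idempotents of `R` lying in `p`; the Pierce stalk of `R`
at the prime `p` is `R ⧸ pierceIdeal p`. -/
def pierceIdeal {R : Type*} [CommRing R] (p : Ideal R) : Ideal R :=
  Ideal.span {e : R | IsIdempotentElem e ∧ e ∈ p}

namespace JCleanAux
variable {R : Type*} [CommRing R]

local notation "J" => Ideal.jacobson (⊥ : Ideal R)

lemma one_add_mem_jac {j : R} (hj : j ∈ J) : IsUnit (1 + j) := by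
  have := Ideal.mem_jacobson_bot.mp hj 1
  simpa [add_comm] using this

lemma unit_add_jac {v j : R} (hv : IsUnit v) (hj : j ∈ J) : IsUnit (v + j) := by
  obtain ⟨u, rfl⟩ := hv
  have h1 : IsUnit ((u : R) * (j * (u⁻¹ : Rˣ) + 1)) := (Units.isUnit u).mul
    (Ideal.mem_jacobson_bot.mp hj (u⁻¹ : Rˣ))
  have key : (u : R) * (u⁻¹ : Rˣ) = 1 := u.mul_inv
  have : (u : R) * (j * (u⁻¹ : Rˣ) + 1) = (u : R) + j := by linear_combination j * key
  rwa [this] at h1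

lemma idem_eq_of_sub_mem_jac {e f : R} (he : IsIdempotentElem e) (hf : IsIdempotentElem f)
    (h : e - f ∈ J) : e = f := by
  have he' : e * e = e := he
  have hf' : f * f = f := hf
  set x := e - f with hx
  have hx3 : x * (1 - x * x) = 0 := by
    rw [hx]; linear_combination (3*f - e - 1) * he' + (f + 1 - 3*e) * hf'
  have hu : IsUnit (1 - x * x) := by
    have := Ideal.mem_jacobson_bot.mp h (-x)
    have h2 : x * (-x) + 1 = 1 - x * x := by ring
    rwa [h2] at this
  have : x = 0 := by
    obtain ⟨u, hu⟩ := hu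
    have key : (1 - x * x) * (u⁻¹ : Rˣ) = 1 := by rw [← hu]; exact u.mul_inv
    calc x = x * ((1 - x * x) * (u⁻¹ : Rˣ)) := by rw [key, mul_one]
    _ = (x * (1 - x * x)) * (u⁻¹ : Rˣ) := by ring
    _ = 0 := by rw [hx3, zero_mul]
  have := sub_eq_zero.mp this
  exact this

lemma mem_pierceIdeal_iff {p : Ideal R} {x : R} :
    x ∈ pierceIdeal p ↔ ∃ e, IsIdempotentElem e ∧ e ∈ p ∧ x * e = x := by
  constructor
  · intro hx
    refine Submodule.span_induction ?_ ?_ ?_ ?_ hx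
    · rintro g ⟨hg, hgp⟩; exact ⟨g, hg, hgp, hg⟩
    · exact ⟨0, by simp [IsIdempotentElem], p.zero_mem, by ring⟩
    · rintro a b _ _ ⟨e, he, hep, hae⟩ ⟨f, hf, hfp, hbf⟩
      have he' : e * e = e := he
      have hf' : f * f = f := hf
      refine ⟨e + f - e * f, ?_, ?_, ?_⟩
      · show (e + f - e*f) * (e + f - e*f) = e + f - e*f
        linear_combination (f*f - 2*f + 1) * he' + (1 - e) * hf'
      · exact Ideal.sub_mem p (Ideal.add_mem p hep hfp) (Ideal.mul_mem_right _ _ hep)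
      · linear_combination (1 - f) * hae + (1 - e) * hbf
    · rintro c a _ ⟨e, he, hep, hae⟩
      exact ⟨e, he, hep, by simp only [smul_eq_mul]; linear_combination c * hae⟩
  · rintro ⟨e, he, hep, hxe⟩
    have : e ∈ pierceIdeal p := Ideal.subset_span ⟨he, hep⟩
    rw [← hxe]
    exact Ideal.mul_mem_left _ _ this

lemma pierce_le_prime {p : Ideal R} : pierceIdeal p ≤ p :=
  Ideal.span_le.mpr fun _ h => h.2

/-- Idempotents of a Pierce stalk are trivial. -/
lemma stalk_idem_trivial {p : Ideal R} (hp : p.IsPrime) (a : R)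
    (h : a * a - a ∈ pierceIdeal p) :
    Ideal.Quotient.mk (pierceIdeal p) a = 0 ∨ Ideal.Quotient.mk (pierceIdeal p) a = 1 := by
  obtain ⟨f, hf, hfp, hmf⟩ := mem_pierceIdeal_iff.mp h
  have hf' : f * f = f := hf
  set g := a - a * f with hg
  have hgidem : g * g = g := by rw [hg]; linear_combination (a*a) * hf' - hmf
  have hag : a - g ∈ pierceIdeal p := by
    have : a - g = a * f := by rw [hg]; ring
    rw [this]
    exact mem_pierceIdeal_iff.mpr ⟨f, hf, hfp, by rw [mul_assoc, hf']⟩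
  have hgp : g * (1 - g) ∈ p := by
    have : g * (1 - g) = 0 := by linear_combination -hgidem
    rw [this]; exact p.zero_mem
  rcases hp.mem_or_mem hgp with hgin | hgin
  · left
    rw [Ideal.Quotient.eq_zero_iff_mem]
    have hgI : g ∈ pierceIdeal p := mem_pierceIdeal_iff.mpr ⟨g, hgidem, hgin, hgidem⟩
    have : a = (a - g) + g := by ring
    rw [this]; exact Ideal.add_mem _ hag hgI
  · right
    rw [show (1 : R ⧸ pierceIdeal p) = Ideal.Quotient.mk (pierceIdeal p) 1 from (map_one _).symm,
      Ideal.Quotient.eq]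
    have h1gid : (1 - g) * (1 - g) = 1 - g := by linear_combination hgidem
    have h1g : (1:R) - g ∈ pierceIdeal p :=
      mem_pierceIdeal_iff.mpr ⟨1 - g, h1gid, hgin, h1gid⟩
    have : a - 1 = (a - g) - (1 - g) := by ring
    rw [this]; exact Ideal.sub_mem _ hag h1g



lemma two_to_three
    (h2 : ∀ r : R, ∃ e : R, IsIdempotentElem e ∧ IsUnit (r * e + (1 - e)) ∧
      r * (1 - e) ∈ J) :
    (∀ a : R ⧸ J, ∃ b : R ⧸ J, a * b * a = a) ∧
      ∀ a : R, a ^ 2 - a ∈ J → ∃! e : R, IsIdempotentElem e ∧ e - a ∈ J := by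
  constructor
  · intro a
    obtain ⟨r, rfl⟩ := Ideal.Quotient.mk_surjective a
    obtain ⟨e, he, hu, hj⟩ := h2 r
    have he' : e * e = e := he
    obtain ⟨u, hu⟩ := hu
    have hu' : (u : R) = r * e + (1 - e) := hu
    set v := ((u⁻¹ : Rˣ) : R) with hvdef
    have hv : (u : R) * v = 1 := u.mul_inv
    refine ⟨Ideal.Quotient.mk _ v, ?_⟩
    rw [← map_mul, ← map_mul, Ideal.Quotient.eq]
    have hue : e * (u : R) = r * e := by linear_combination e * hu' + (r - 1) * he'
    have key2 : (r * e) * v * (r * e) - r * e = 0 := by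
      rw [← hue]
      linear_combination ((u:R)) * he' + (e*e*(u:R)) * hv
    have key : r * v * r - r = (v * (r + r * e)) * (r * (1 - e)) - r * (1 - e) +
        ((r * e) * v * (r * e) - r * e) := by ring
    rw [key, key2, add_zero]
    exact Ideal.sub_mem _ (Ideal.mul_mem_left _ _ hj) hj
  · intro a ha
    obtain ⟨e, he, hu, hj⟩ := h2 a
    have he' : e * e = e := he
    obtain ⟨u, hu⟩ := hu
    have hu' : (u : R) = a * e + (1 - e) := hu
    set v := ((u⁻¹ : Rˣ) : R) with hvdef
    have hv : (u : R) * v = 1 := u.mul_inv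
    have h5 : (u : R) * (e - a * e) = -((a ^ 2 - a) * e) := by
      linear_combination (e - a*e) * hu' + (2*a - a^2 - 1) * he'
    have h6 : e - a * e = v * (-((a ^ 2 - a) * e)) := by
      rw [← h5]
      linear_combination (a*e - e) * hv
    have h7 : e - a * e ∈ J := by
      rw [h6]
      exact Ideal.mul_mem_left _ _ (neg_mem (Ideal.mul_mem_right _ _ ha))
    have h8 : e - a ∈ J := by
      have : e - a = (e - a * e) + (-(a * (1 - e))) := by ring
      rw [this]
      exact Ideal.add_mem _ h7 (neg_mem hj)
    refine ⟨e, ⟨he, h8⟩, ?_⟩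
    rintro f ⟨hf, hfa⟩
    exact idem_eq_of_sub_mem_jac hf he (by
      have : f - e = (f - a) - (e - a) := by ring
      rw [this]; exact Ideal.sub_mem _ hfa h8)

lemma three_to_two
    (h3 : (∀ a : R ⧸ J, ∃ b : R ⧸ J, a * b * a = a) ∧
      ∀ a : R, a ^ 2 - a ∈ J → ∃! e : R, IsIdempotentElem e ∧ e - a ∈ J) :
    ∀ r : R, ∃ e : R, IsIdempotentElem e ∧ IsUnit (r * e + (1 - e)) ∧
      r * (1 - e) ∈ J := by
  intro r
  obtain ⟨b', hb'⟩ := h3.1 (Ideal.Quotient.mk _ r)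
  obtain ⟨b, rfl⟩ := Ideal.Quotient.mk_surjective b'
  have hrb : r * b * r - r ∈ J := by
    rw [← Ideal.Quotient.eq, map_mul, map_mul]; exact hb'
  have hc : (r * b) ^ 2 - r * b ∈ J := by
    have : (r * b) ^ 2 - r * b = (r * b * r - r) * b := by ring
    rw [this]; exact Ideal.mul_mem_right _ _ hrb
  obtain ⟨e, ⟨he, heJ⟩, -⟩ := h3.2 (r * b) hc
  have he' : e * e = e := he
  refine ⟨e, he, ?_, ?_⟩
  · have hvw : (r * e + (1 - e)) * (b * e + (1 - e)) = 1 + (-(e - r * b) * e) := by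
      linear_combination (r*b - r - b + 2) * he'
    have : IsUnit ((r * e + (1 - e)) * (b * e + (1 - e))) := by
      rw [hvw]
      exact one_add_mem_jac (Ideal.mul_mem_right _ _ (neg_mem heJ))
    exact isUnit_of_mul_isUnit_left this
  · have : r * (1 - e) = -(r * b * r - r) - r * (e - r * b) := by ring
    rw [this]
    exact Ideal.sub_mem _ (neg_mem hrb) (Ideal.mul_mem_left _ _ heJ)


lemma two_to_one
    (h2 : ∀ r : R, ∃ e : R, IsIdempotentElem e ∧ IsUnit (r * e + (1 - e)) ∧
      r * (1 - e) ∈ J) :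
    IsCleanRing R ∧ ∀ p : Ideal R, p.IsPrime →
      Ideal.jacobson (⊥ : Ideal (R ⧸ pierceIdeal p)) =
        (Ideal.jacobson (⊥ : Ideal R)).map (Ideal.Quotient.mk (pierceIdeal p)) := by
  constructor
  · intro a
    obtain ⟨e, he, hu, hj⟩ := h2 a
    have he' : e * e = e := he
    obtain ⟨u, hu'⟩ := hu
    have hu'' : (u : R) = a * e + (1 - e) := hu'
    set v := ((u⁻¹ : Rˣ) : R) with hvdef
    have hv : (u : R) * v = 1 := u.mul_inv
    have hue : e * (u : R) = a * e := by linear_combination e * hu'' + (a - 1) * he'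
    have hwunit : IsUnit (a * e + e - 1) := by
      have hkey : (a * e + e - 1) * (e * v + e - 1) = 1 := by
        rw [← hue]
        linear_combination ((u:R)*v + (u:R) + v + 1) * he' + e * hv
      exact IsUnit.of_mul_eq_one _ hkey
    refine ⟨1 - e, (a * e + e - 1) + a * (1 - e), he.one_sub, unit_add_jac hwunit hj, by ring⟩
  · intro p hp
    set I := pierceIdeal p with hI
    refine le_antisymm ?_ ?_
    · intro x hx
      obtain ⟨r, rfl⟩ := Ideal.Quotient.mk_surjective x
      obtain ⟨e, he, hu, hj⟩ := h2 r
      have he' : e * e = e := he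
      have hee : e * (1 - e) ∈ p := by
        have : e * (1 - e) = 0 := by linear_combination -he'
        rw [this]; exact p.zero_mem
      rcases hp.mem_or_mem hee with hep | hep
      · have heI : e ∈ I := mem_pierceIdeal_iff.mpr ⟨e, he, hep, he'⟩
        have : Ideal.Quotient.mk I r = Ideal.Quotient.mk I (r * (1 - e)) := by
          rw [Ideal.Quotient.eq]
          have : r - r * (1 - e) = r * e := by ring
          rw [this]; exact Ideal.mul_mem_left _ _ heI
        rw [this]
        exact Ideal.mem_map_of_mem _ hj
      · have heI : (1 : R) - e ∈ I := mem_pierceIdeal_iff.mpr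
          ⟨1 - e, he.one_sub, hep, he.one_sub⟩
        have hmk : Ideal.Quotient.mk I (r * e + (1 - e)) = Ideal.Quotient.mk I r := by
          rw [Ideal.Quotient.eq]
          have h4 : r * e + (1 - e) - r = (1 - r) * (1 - e) := by ring
          rw [h4]
          exact Ideal.mul_mem_left _ _ heI
        have hxu : IsUnit (Ideal.Quotient.mk I r) := by
          rw [← hmk]; exact hu.map _
        exfalso
        have htop : Ideal.jacobson (⊥ : Ideal (R ⧸ I)) = ⊤ :=
          Ideal.eq_top_of_isUnit_mem _ hx hxu
        have hbot : (⊥ : Ideal (R ⧸ I)) = ⊤ := Ideal.jacobson_eq_top_iff.mp htop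
        have h1 : (1 : R ⧸ I) = 0 := by
          have : (1 : R ⧸ I) ∈ (⊥ : Ideal (R ⧸ I)) := hbot ▸ Submodule.mem_top
          simpa using this
        have : (1 : R) ∈ I := by
          rw [← Ideal.Quotient.eq_zero_iff_mem, map_one]; exact h1
        exact hp.ne_top ((Ideal.eq_top_iff_one p).mpr (pierce_le_prime this))
    · rw [Ideal.map_le_iff_le_comap]
      intro j hj
      show Ideal.Quotient.mk I j ∈ Ideal.jacobson (⊥ : Ideal (R ⧸ I))
      rw [Ideal.mem_jacobson_bot]
      intro y
      obtain ⟨s, rfl⟩ := Ideal.Quotient.mk_surjective y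
      rw [← map_mul, ← map_one (Ideal.Quotient.mk I), ← map_add]
      exact (Ideal.mem_jacobson_bot.mp hj s).map _

lemma one_to_two (hclean : IsCleanRing R)
    (hstalk : ∀ p : Ideal R, p.IsPrime →
      Ideal.jacobson (⊥ : Ideal (R ⧸ pierceIdeal p)) =
        (Ideal.jacobson (⊥ : Ideal R)).map (Ideal.Quotient.mk (pierceIdeal p))) :
    ∀ r : R, ∃ e : R, IsIdempotentElem e ∧ IsUnit (r * e + (1 - e)) ∧
      r * (1 - e) ∈ J := by
  intro r
  have hGood : ∀ p : Ideal R, p.IsPrime → ∃ e : R,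
      (IsIdempotentElem e ∧ ((∃ s, r * s * e = e) ∨ r * e ∈ J)) ∧ 1 - e ∈ p := by
    intro p hp
    set I := pierceIdeal p with hI
    have hdich : ∀ x : R ⧸ I, ¬ IsUnit x → x ∈ Ideal.jacobson (⊥ : Ideal (R ⧸ I)) := by
      intro x hx
      rw [Ideal.mem_jacobson_bot]
      intro y
      obtain ⟨a, ha⟩ := Ideal.Quotient.mk_surjective (-(x * y))
      obtain ⟨e, u, he, hu, hadd⟩ := hclean a
      have h0 : e * e - e = 0 := by rw [(he : e * e = e)]; ring
      have hmka : Ideal.Quotient.mk I a =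
          Ideal.Quotient.mk I e + Ideal.Quotient.mk I u := by rw [← map_add, hadd]
      rcases stalk_idem_trivial hp e (h0 ▸ I.zero_mem) with h1 | h1
      · exfalso
        have hneg : IsUnit (-(x * y)) := by
          rw [← ha, hmka, h1, zero_add]; exact hu.map _
        have hxy : IsUnit (x * y) := by simpa using hneg.neg
        exact hx (isUnit_of_mul_isUnit_left hxy)
      · have : x * y + 1 = -(Ideal.Quotient.mk I u) := by
          have h2 : -(x * y) = 1 + Ideal.Quotient.mk I u := by rw [← ha, hmka, h1]
          linear_combination -h2
        rw [this]
        exact (hu.map _).neg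
    by_cases hu : IsUnit (Ideal.Quotient.mk I r)
    · obtain ⟨y, hy⟩ := hu.exists_right_inv
      obtain ⟨s, rfl⟩ := Ideal.Quotient.mk_surjective y
      have hrs : r * s - 1 ∈ I := by
        rw [← Ideal.Quotient.eq_zero_iff_mem, map_sub, map_mul, map_one, hy, sub_self]
      obtain ⟨f, hf, hfp, hmf⟩ := mem_pierceIdeal_iff.mp hrs
      refine ⟨1 - f, ⟨hf.one_sub, Or.inl ⟨s, ?_⟩⟩, by simpa using hfp⟩
      linear_combination -hmf
    · have hxj := hdich _ hu
      rw [hstalk p hp] at hxj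
      obtain ⟨j, hj, hjr⟩ :=
        (Ideal.mem_map_iff_of_surjective _ Ideal.Quotient.mk_surjective).mp hxj
      have hrj : r - j ∈ I := Ideal.Quotient.eq.mp hjr.symm
      obtain ⟨f, hf, hfp, hmf⟩ := mem_pierceIdeal_iff.mp hrj
      refine ⟨1 - f, ⟨hf.one_sub, Or.inr ?_⟩, by simpa using hfp⟩
      have : r * (1 - f) = j * (1 - f) := by linear_combination -hmf
      rw [this]
      exact Ideal.mul_mem_right _ _ hj
  set Good : Set R := {e : R | IsIdempotentElem e ∧ ((∃ s, r * s * e = e) ∨ r * e ∈ J)}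
    with hGoodDef
  have hspan : (1 : R) ∈ Ideal.span Good := by
    by_contra hone
    have hne : Ideal.span Good ≠ ⊤ := fun h => hone (h ▸ Submodule.mem_top)
    obtain ⟨m, hm, hle⟩ := Ideal.exists_le_maximal _ hne
    obtain ⟨e, heG, hem⟩ := hGood m hm.isPrime
    have h1 : (1 : R) ∈ m := by
      have h2 := hle (Ideal.subset_span heG)
      have h3 := m.add_mem h2 hem
      simpa using h3
    exact hm.ne_top ((Ideal.eq_top_iff_one m).mpr h1)
  have hmain : ∃ g h s : R, g * g = g ∧ h * h = h ∧ r * s * g = g ∧ r * h ∈ J ∧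
      (1 : R) * (g + h - g * h) = 1 := by
    refine Submodule.span_induction
      (p := fun x _ => ∃ g h s : R, g * g = g ∧ h * h = h ∧ r * s * g = g ∧ r * h ∈ J ∧
        x * (g + h - g * h) = x) ?_ ?_ ?_ ?_ hspan
    · rintro x ⟨hx, ⟨s, hs⟩ | hcase⟩
      · have hx' : x * x = x := hx
        exact ⟨x, 0, s, hx', by ring, hs,
          by rw [mul_zero]; exact Submodule.zero_mem _, by linear_combination hx'⟩
      · have hx' : x * x = x := hx
        exact ⟨0, x, 0, by ring, hx', by ring, hcase, by linear_combination hx'⟩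
    · exact ⟨0, 0, 0, by ring, by ring, by ring,
        by rw [mul_zero]; exact Submodule.zero_mem _, by ring⟩
    · rintro x y _ _ ⟨g, h, s, hg, hh, hs, hrh, hx⟩ ⟨g', h', s', hg', hh', hs', hrh', hy⟩
      have hG : (g + g' - g * g') * (g + g' - g * g') = g + g' - g * g' := by
        linear_combination (g' * g' - 2 * g' + 1) * hg + (1 - g) * hg'
      have hH : (h + h' - h * h') * (h + h' - h * h') = h + h' - h * h' := by
        linear_combination (h' * h' - 2 * h' + 1) * hh + (1 - h) * hh'
      have hrt : r * (s * g + s' * g' * (1 - g)) = g + g' - g * g' := by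
        linear_combination hs + (1 - g) * hs'
      have hgG : g * (g + g' - g * g') = g := by linear_combination (1 - g') * hg
      have hg'G : g' * (g + g' - g * g') = g' := by linear_combination (1 - g) * hg'
      have hhH : h * (h + h' - h * h') = h := by linear_combination (1 - h') * hh
      have hh'H : h' * (h + h' - h * h') = h' := by linear_combination (1 - h) * hh'
      set G := g + g' - g * g' with hGdef
      set H := h + h' - h * h' with hHdef
      have habs1 : (g + h - g * h) * (G + H - G * H) = g + h - g * h := by
        linear_combination (1 - H + h * H - h) * hgG + (1 - G) * hhH
      have habs2 : (g' + h' - g' * h') * (G + H - G * H) = g' + h' - g' * h' := by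
        linear_combination (1 - H + h' * H - h') * hg'G + (1 - G) * hh'H
      have hxE : x * (G + H - G * H) = x := by
        calc x * (G + H - G * H) = (x * (g + h - g * h)) * (G + H - G * H) := by rw [hx]
          _ = x * ((g + h - g * h) * (G + H - G * H)) := by ring
          _ = x * (g + h - g * h) := by rw [habs1]
          _ = x := hx
      have hyE : y * (G + H - G * H) = y := by
        calc y * (G + H - G * H) = (y * (g' + h' - g' * h')) * (G + H - G * H) := by rw [hy]
          _ = y * ((g' + h' - g' * h') * (G + H - G * H)) := by ring
          _ = y * (g' + h' - g' * h') := by rw [habs2]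
          _ = y := hy
      refine ⟨G, H, s * g + s' * g' * (1 - g), hG, hH, ?_, ?_, ?_⟩
      · rw [hrt]; exact hG
      · have hHeq : r * H = r * h + r * h' - (r * h) * h' := by rw [hHdef]; ring
        rw [hHeq]
        exact Ideal.sub_mem _ (Ideal.add_mem _ hrh hrh') (Ideal.mul_mem_right _ _ hrh)
      · rw [add_mul, hxE, hyE]
    · rintro c x _ ⟨g, h, s, hg, hh, hs, hrh, hx⟩
      exact ⟨g, h, s, hg, hh, hs, hrh, by
        simp only [smul_eq_mul]; linear_combination c * hx⟩
  obtain ⟨g, h, s, hg, hh, hs, hrh, hone⟩ := hmain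
  rw [one_mul] at hone
  refine ⟨g, hg, ?_, ?_⟩
  · have hkey : (r * g + (1 - g)) * (s * g + (1 - g)) = 1 := by
      linear_combination g * hs + (2 - r - s) * hg
    exact IsUnit.of_mul_eq_one _ hkey
  · have h1 : r * (1 - g) = (r * h) * (1 - g) := by linear_combination (-r) * hone
    rw [h1]
    exact Ideal.mul_mem_right _ _ hrh
end JCleanAux

open JCleanAux in
/-- Characterizations of commutative J-clean rings: `R` is clean with the Jacobson radical of
each Pierce stalk equal to the image of `J(R)`; iff each `r` admits an idempotent `e` with
`r e + (1 - e)` a unit and `r (1 - e) ∈ J(R)`; iff `R/J(R)` is von Neumann regular and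
idempotents lift uniquely modulo `J(R)`. -/
theorem jClean_tfae {R : Type*} [CommRing R] :
    List.TFAE
      [IsCleanRing R ∧ ∀ p : Ideal R, p.IsPrime →
         Ideal.jacobson (⊥ : Ideal (R ⧸ pierceIdeal p)) =
           (Ideal.jacobson (⊥ : Ideal R)).map (Ideal.Quotient.mk (pierceIdeal p)),
       ∀ r : R, ∃ e : R, IsIdempotentElem e ∧ IsUnit (r * e + (1 - e)) ∧
         r * (1 - e) ∈ Ideal.jacobson (⊥ : Ideal R),
       (∀ a : R ⧸ Ideal.jacobson (⊥ : Ideal R),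
          ∃ b : R ⧸ Ideal.jacobson (⊥ : Ideal R), a * b * a = a) ∧
         ∀ a : R, a ^ 2 - a ∈ Ideal.jacobson (⊥ : Ideal R) →
           ∃! e : R, IsIdempotentElem e ∧ e - a ∈ Ideal.jacobson (⊥ : Ideal R)] := by
  tfae_have 1 → 2 := fun h => one_to_two h.1 h.2
  tfae_have 2 → 1 := two_to_one
  tfae_have 2 → 3 := two_to_three
  tfae_have 3 → 2 := three_to_two
  tfae_finish
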